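/- Marcinkiewicz–Zygmund strong law of large numbers: if (ξ_i) are i.i.d. real random variables with E|ξ_1|^p < ∞ for some p ∈ (0,1), then n^{−1/p} ∑_{i=1}^n ξ_i → 0 almost surely. -/

import Mathlib

open MeasureTheory Filter
open scoped BigOperators ENNReal

/-- Telescoping bound: for `x ≥ 1` and `r > 1`,
`x ^ (-r) ≤ 2^r/(r-1) * (x^(1-r) - (x+1)^(1-r))`. -/
lemma mz_telescope {r : ℝ} (hr : 1 < r) {x : ℝ} (hx : 1 ≤ x) :
    x ^ (-r) ≤ 2 ^ r / (r - 1) * (x ^ (1 - r) - (x + 1) ^ (1 - r)) := by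
  have hx0 : (0:ℝ) < x := lt_of_lt_of_le one_pos hx
  have hx1 : (0:ℝ) < x + 1 := by linarith
  -- Bernoulli : (1 + 1/x)^r ≥ 1 + r/x
  have hb : 1 + r * (1 / x) ≤ (1 + 1 / x) ^ r :=
    one_add_mul_self_le_rpow_one_add
      (by have : (0:ℝ) ≤ 1/x := by positivity
          linarith : (-1:ℝ) ≤ 1/x) hr.le
  -- hence (x+1)^r ≥ x^(r-1) * (x + r)
  have hxr : (0:ℝ) < x ^ (r - 1) := Real.rpow_pos_of_pos hx0 _
  have key : x ^ (r - 1) * (x + r) ≤ (x + 1) ^ r := by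
    have h1 : x + 1 = x * (1 + 1/x) := by field_simp
    have h2 : (x + 1) ^ r = x ^ r * (1 + 1/x) ^ r := by
      rw [h1, Real.mul_rpow hx0.le (by positivity)]
    rw [h2]
    have h3 : x ^ r * (1 + r * (1/x)) ≤ x ^ r * (1 + 1/x) ^ r :=
      mul_le_mul_of_nonneg_left hb (Real.rpow_nonneg hx0.le _)
    refine le_trans ?_ h3
    have h4 : x ^ r = x ^ (r - 1) * x := by
      rw [← Real.rpow_add_one hx0.ne' (r-1)]; ring_nf
    rw [h4]
    have h5 : x * (1 + r * (1/x)) = x + r := by field_simp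
    rw [mul_assoc, h5]
  -- hence (x+r) * (x+1)^(-r) ≤ x^(1-r)
  have e1 : x ^ (1 - r) * x ^ (r - 1) = 1 := by
    rw [← Real.rpow_add hx0]; norm_num
  have e2 : (x + 1) ^ r * (x + 1) ^ (-r) = 1 := by
    rw [← Real.rpow_add hx1]; norm_num
  have hnr : (0:ℝ) ≤ (x + 1) ^ (-r) := Real.rpow_nonneg hx1.le _
  have step1 : (x + r) * (x + 1) ^ (-r) ≤ x ^ (1 - r) := by
    have h6 : x + r ≤ x ^ (1 - r) * (x + 1) ^ r := by
      calc x + r = x ^ (1 - r) * (x ^ (r - 1) * (x + r)) := by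
            rw [← mul_assoc, e1, one_mul]
        _ ≤ x ^ (1 - r) * (x + 1) ^ r :=
            mul_le_mul_of_nonneg_left key (Real.rpow_nonneg hx0.le _)
    calc (x + r) * (x + 1) ^ (-r) ≤ (x ^ (1 - r) * (x + 1) ^ r) * (x + 1) ^ (-r) :=
          mul_le_mul_of_nonneg_right h6 hnr
      _ = x ^ (1 - r) := by rw [mul_assoc, e2, mul_one]
  -- (x+1)^(1-r) = (x+1) * (x+1)^(-r)
  have e3 : (x + 1) ^ (1 - r) = (x + 1) * (x + 1) ^ (-r) := by
    rw [show (1:ℝ) - r = -r + 1 by ring, Real.rpow_add_one hx1.ne', mul_comm]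
  have step2 : (r - 1) * (x + 1) ^ (-r) ≤ x ^ (1 - r) - (x + 1) ^ (1 - r) := by
    rw [e3]; nlinarith [step1]
  -- (x+1)^(-r) ≥ 2^(-r) * x^(-r)
  have step3 : 2 ^ (-r) * x ^ (-r) ≤ (x + 1) ^ (-r) := by
    have h7 : (2 * x) ^ (-r:ℝ) ≤ (x + 1) ^ (-r:ℝ) :=
      Real.rpow_le_rpow_of_nonpos hx1 (by linarith) (by linarith)
    calc 2 ^ (-r) * x ^ (-r) = (2 * x) ^ (-r:ℝ) :=
          (Real.mul_rpow (by norm_num) hx0.le).symm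
      _ ≤ (x + 1) ^ (-r:ℝ) := h7
  have e4 : (2:ℝ) ^ r * 2 ^ (-r) = 1 := by
    rw [← Real.rpow_add (by norm_num : (0:ℝ) < 2)]; norm_num
  have h2r : (0:ℝ) < 2 ^ r := Real.rpow_pos_of_pos (by norm_num) _
  have hr1 : (0:ℝ) < r - 1 := by linarith
  rw [div_mul_eq_mul_div, le_div_iff₀ hr1]
  have c1 : (r - 1) * (2 ^ (-r) * x ^ (-r)) ≤ x ^ (1 - r) - (x + 1) ^ (1 - r) :=
    (mul_le_mul_of_nonneg_left step3 hr1.le).trans step2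
  have c2 : 2 ^ r * ((r - 1) * (2 ^ (-r) * x ^ (-r))) ≤ 2 ^ r * (x ^ (1 - r) - (x + 1) ^ (1 - r)) :=
    mul_le_mul_of_nonneg_left c1 h2r.le
  have e5 : x ^ (-r) * (r - 1) = 2 ^ r * ((r - 1) * (2 ^ (-r) * x ^ (-r))) := by
    have : (2:ℝ) ^ r * ((r - 1) * (2 ^ (-r) * x ^ (-r))) = (2 ^ r * 2 ^ (-r)) * ((r - 1) * x ^ (-r)) := by
      ring
    rw [this, e4]; ring
  rw [e5]; exact c2

/-- Tail sum bound: `∑_{m ≤ i < n} i^(-r) ≤ 2^r/(r-1) * m^(1-r)` for `m ≥ 1`, `r > 1`. -/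
lemma mz_tail {r : ℝ} (hr : 1 < r) {m : ℕ} (hm : 1 ≤ m) (n : ℕ) :
    ∑ i ∈ Finset.Ico m n, ((i:ℝ)) ^ (-r) ≤ 2 ^ r / (r - 1) * (m:ℝ) ^ (1 - r) := by
  have hC : (0:ℝ) ≤ 2 ^ r / (r - 1) := by
    apply div_nonneg (Real.rpow_nonneg (by norm_num) _) (by linarith)
  set g : ℕ → ℝ := fun i => ((i:ℝ)) ^ (1 - r) with hg
  have hgnn : ∀ i, 0 ≤ g i := fun i => Real.rpow_nonneg (Nat.cast_nonneg i) _
  have step : ∀ i ∈ Finset.Ico m n, ((i:ℝ)) ^ (-r) ≤ 2 ^ r / (r - 1) * (g i - g (i+1)) := by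
    intro i hi
    have h1 : (1:ℝ) ≤ (i:ℝ) := by
      have := (Finset.mem_Ico.1 hi).1
      exact_mod_cast le_trans hm this
    have := mz_telescope hr h1
    simpa [hg, Nat.cast_add, Nat.cast_one] using this
  calc ∑ i ∈ Finset.Ico m n, ((i:ℝ)) ^ (-r)
      ≤ ∑ i ∈ Finset.Ico m n, 2 ^ r / (r - 1) * (g i - g (i+1)) := Finset.sum_le_sum step
    _ = 2 ^ r / (r - 1) * ∑ i ∈ Finset.Ico m n, (g i - g (i+1)) := by
        rw [Finset.mul_sum]
    _ ≤ 2 ^ r / (r - 1) * (m:ℝ) ^ (1 - r) := by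
        apply mul_le_mul_of_nonneg_left _ hC
        rcases le_or_gt n m with h | h
        · rw [Finset.Ico_eq_empty (by omega)]
          simp [hgnn m, Real.rpow_nonneg (Nat.cast_nonneg m)]
        · rw [Finset.sum_Ico_eq_sum_range]
          have : ∀ j, g (m + j) - g (m + j + 1) = (fun j => g (m + j)) j - (fun j => g (m + j)) (j+1) := by
            intro j; simp [Nat.add_assoc]
          simp_rw [this]
          rw [Finset.sum_range_sub' (fun j => g (m + j))]
          have : 0 ≤ g (m + (n - m)) := hgnn _
          simpa using by linarith

/-- Pointwise bound: `∑_i i^(-1/p) * x * 1_{x ≤ i^(1/p)} ≤ C(p) * x^p`. -/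
lemma mz_pointwise {p : ℝ} (hp0 : 0 < p) (hp1 : p < 1) {x : ℝ} (hx : 0 ≤ x) :
    (∑' i : ℕ, if x ≤ (i:ℝ) ^ (1/p) then ((i:ℝ)) ^ (-(1/p)) * x else 0)
      ≤ (2 ^ (1/p) / (1/p - 1) * 2) * x ^ p := by
  set r : ℝ := 1/p with hrdef
  have hr : 1 < r := one_lt_one_div hp0 hp1
  have hpr : p * r = 1 := by rw [hrdef]; field_simp
  set C : ℝ := 2 ^ r / (r - 1) with hCdef
  have hC : (0:ℝ) ≤ C := by
    apply div_nonneg (Real.rpow_nonneg (by norm_num) _) (by linarith)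
  set a : ℕ → ℝ := fun i => if x ≤ (i:ℝ) ^ r then ((i:ℝ)) ^ (-r) * x else 0 with ha
  have hann : ∀ i, 0 ≤ a i := by
    intro i; rw [ha]
    dsimp only
    split
    · exact mul_nonneg (Real.rpow_nonneg (Nat.cast_nonneg i) _) hx
    · exact le_refl 0
  set m : ℕ := max 1 ⌈x ^ p⌉₊ with hm
  have hm1 : 1 ≤ m := le_max_left _ _
  -- terms below m vanish
  have ha0 : ∀ i < m, a i = 0 := by
    intro i hi
    rcases Nat.eq_zero_or_pos i with rfl | hipos
    · rw [ha]
      dsimp only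
      rw [Nat.cast_zero, Real.zero_rpow (neg_ne_zero.2 (by positivity : r ≠ 0))]
      simp
    · have hi' : i < ⌈x ^ p⌉₊ := by omega
      have h1 : (i:ℝ) < x ^ p := Nat.lt_ceil.1 hi'
      have hx0 : 0 < x := by
        by_contra h
        have hxe : x = 0 := le_antisymm (not_lt.1 h) hx
        rw [hxe, Real.zero_rpow hp0.ne'] at h1
        have : (0:ℝ) ≤ i := Nat.cast_nonneg i
        linarith
      have h2 : (i:ℝ) ^ r < (x ^ p) ^ r :=
        Real.rpow_lt_rpow (Nat.cast_nonneg i) h1 (by linarith)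
      have h3 : (x ^ p) ^ r = x := by
        rw [← Real.rpow_mul hx, hpr, Real.rpow_one]
      rw [h3] at h2
      rw [ha]
      simp only [if_neg (not_le.2 h2)]
  -- partial sums are bounded by `x * (C * m^(1-r))`
  have hpartial : ∀ n, ∑ i ∈ Finset.range n, a i ≤ x * (C * (m:ℝ) ^ (1 - r)) := by
    intro n
    have e1 : ∑ i ∈ Finset.range n, a i = ∑ i ∈ Finset.Ico m n, a i := by
      rcases le_or_gt m n with h | h
      · rw [Finset.range_eq_Ico, ← Finset.sum_Ico_consecutive _ (Nat.zero_le m) h]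
        have : ∑ i ∈ Finset.Ico 0 m, a i = 0 :=
          Finset.sum_eq_zero fun i hi => ha0 i (Finset.mem_Ico.1 hi).2
        rw [this, zero_add]
      · have h1 : ∑ i ∈ Finset.range n, a i = 0 :=
          Finset.sum_eq_zero fun i hi => ha0 i (lt_of_lt_of_le (Finset.mem_range.1 hi) h.le)
        have h2 : Finset.Ico m n = ∅ := Finset.Ico_eq_empty (by omega)
        rw [h1, h2, Finset.sum_empty]
    rw [e1]
    calc ∑ i ∈ Finset.Ico m n, a i ≤ ∑ i ∈ Finset.Ico m n, x * ((i:ℝ)) ^ (-r) := by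
          apply Finset.sum_le_sum
          intro i _
          rw [ha]
          dsimp only
          split
          · rw [mul_comm]
          · exact mul_nonneg hx (Real.rpow_nonneg (Nat.cast_nonneg i) _)
      _ = x * ∑ i ∈ Finset.Ico m n, ((i:ℝ)) ^ (-r) := by rw [Finset.mul_sum]
      _ ≤ x * (C * (m:ℝ) ^ (1 - r)) :=
          mul_le_mul_of_nonneg_left (mz_tail hr hm1 n) hx
  have htsum : (∑' i, a i) ≤ x * (C * (m:ℝ) ^ (1 - r)) :=
    Real.tsum_le_of_sum_range_le hann hpartial
  refine htsum.trans ?_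
  -- now bound `x * (C * m^(1-r)) ≤ 2C x^p`
  rcases le_or_gt x 1 with hx1 | hx1
  · have hcl : ⌈x ^ p⌉₊ ≤ 1 := Nat.ceil_le.2 (by
      simpa using Real.rpow_le_one hx hx1 hp0.le)
    have hme : m = 1 := by omega
    rw [hme]
    simp only [Nat.cast_one, Real.one_rpow, mul_one]
    -- x * C ≤ C * 2 * x^p  using x ≤ x^p
    have hxp : x ≤ x ^ p := by
      rcases hx.eq_or_lt with rfl | hx0
      · rw [Real.zero_rpow hp0.ne']
      · calc x = x ^ (1:ℝ) := (Real.rpow_one x).symm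
          _ ≤ x ^ p := Real.rpow_le_rpow_of_exponent_ge hx0 hx1 hp1.le
    have hxpnn : 0 ≤ x ^ p := Real.rpow_nonneg hx _
    nlinarith
  · have hx0 : (0:ℝ) < x := lt_trans one_pos hx1
    have hxp1 : (1:ℝ) ≤ x ^ p := Real.one_le_rpow hx1.le hp0.le
    have hxppos : (0:ℝ) < x ^ p := by linarith
    have hmc : (x ^ p) ≤ (m:ℝ) := by
      have := Nat.le_ceil (x ^ p)
      have h2 : (⌈x ^ p⌉₊ : ℝ) ≤ (m:ℝ) := by
        exact_mod_cast Nat.cast_le.2 (le_max_right 1 ⌈x ^ p⌉₊)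
      linarith
    have hmr : ((m:ℝ)) ^ (1 - r) ≤ (x ^ p) ^ (1 - r) :=
      Real.rpow_le_rpow_of_nonpos hxppos hmc (by linarith)
    have e2 : (x ^ p) ^ (1 - r) = x ^ (p - 1) := by
      rw [← Real.rpow_mul hx]
      congr 1
      have : p * (1 - r) = p - p * r := by ring
      rw [this, hpr]
    have e3 : x * x ^ (p - 1) = x ^ p := by
      nth_rewrite 1 [← Real.rpow_one x]
      rw [← Real.rpow_add hx0]
      ring_nf
    calc x * (C * (m:ℝ) ^ (1 - r)) ≤ x * (C * x ^ (p - 1)) := by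
          apply mul_le_mul_of_nonneg_left _ hx
          apply mul_le_mul_of_nonneg_left _ hC
          rw [e2] at hmr; exact hmr
      _ = C * (x * x ^ (p - 1)) := by ring
      _ = C * x ^ p := by rw [e3]
      _ ≤ C * 2 * x ^ p := by nlinarith [Real.rpow_nonneg hx p]

/-- If `∑ i^(-r) |a i| < ∞` with `r > 0`, then `n^(-r) ∑_{i<n} a i → 0`. -/
lemma mz_kronecker {r : ℝ} (hr : 0 < r) {a : ℕ → ℝ}
    (h : Summable (fun i : ℕ => (i:ℝ) ^ (-r) * |a i|)) :
    Tendsto (fun n : ℕ => (n:ℝ) ^ (-r) * ∑ i ∈ Finset.range n, a i) atTop (nhds 0) := by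
  set f : ℕ → ℝ := fun i => ((i:ℝ)) ^ (-r) * |a i| with hf
  have hfnn : ∀ i, 0 ≤ f i := fun i =>
    mul_nonneg (Real.rpow_nonneg (Nat.cast_nonneg i) _) (abs_nonneg _)
  rw [Metric.tendsto_atTop]
  intro ε hε
  -- choose m with tail < ε/2 and m ≥ 1
  have htail : Tendsto (fun m => ∑' i, f (i + m)) atTop (nhds 0) := tendsto_sum_nat_add f
  have hev : ∀ᶠ m in atTop, (∑' i, f (i + m)) < ε/2 ∧ 1 ≤ m := by
    filter_upwards [htail.eventually (gt_mem_nhds (half_pos hε)), eventually_ge_atTop 1]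
      with m h1 h2
    exact ⟨h1, h2⟩
  obtain ⟨m, hm⟩ := hev.exists
  obtain ⟨hmtail, hm1⟩ := hm
  -- choose N with n^(-r) * |∑_{i<m} a i| < ε/2
  have hzero : Tendsto (fun n : ℕ => ((n:ℝ)) ^ (-r)) atTop (nhds 0) :=
    (tendsto_rpow_neg_atTop hr).comp tendsto_natCast_atTop_atTop
  have hzero2 : Tendsto (fun n : ℕ => ((n:ℝ)) ^ (-r) * |∑ i ∈ Finset.range m, a i|)
      atTop (nhds 0) := by
    simpa using hzero.mul_const |∑ i ∈ Finset.range m, a i|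
  obtain ⟨N, hN⟩ := (hzero2.eventually (gt_mem_nhds (half_pos hε))).exists_forall_of_atTop
  refine ⟨max N m, fun n hn => ?_⟩
  have hnN : N ≤ n := le_trans (le_max_left _ _) hn
  have hnm : m ≤ n := le_trans (le_max_right _ _) hn
  rw [Real.dist_eq, sub_zero]
  have hsplit : ∑ i ∈ Finset.range n, a i
      = ∑ i ∈ Finset.range m, a i + ∑ i ∈ Finset.Ico m n, a i := by
    rw [Finset.range_eq_Ico, Finset.range_eq_Ico]
    exact (Finset.sum_Ico_consecutive a (Nat.zero_le m) hnm).symm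
  have hnr : (0:ℝ) ≤ ((n:ℝ)) ^ (-r) := Real.rpow_nonneg (Nat.cast_nonneg n) _
  have habs : |(n:ℝ) ^ (-r) * ∑ i ∈ Finset.range n, a i|
      ≤ (n:ℝ) ^ (-r) * |∑ i ∈ Finset.range m, a i|
        + ∑ i ∈ Finset.Ico m n, (n:ℝ) ^ (-r) * |a i| := by
    calc |(n:ℝ) ^ (-r) * ∑ i ∈ Finset.range n, a i|
        = (n:ℝ) ^ (-r) * |∑ i ∈ Finset.range m, a i + ∑ i ∈ Finset.Ico m n, a i| := by
          rw [hsplit, abs_mul, abs_of_nonneg hnr]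
      _ ≤ (n:ℝ) ^ (-r) * (|∑ i ∈ Finset.range m, a i| + |∑ i ∈ Finset.Ico m n, a i|) :=
          mul_le_mul_of_nonneg_left (abs_add_le _ _) hnr
      _ = (n:ℝ) ^ (-r) * |∑ i ∈ Finset.range m, a i|
          + (n:ℝ) ^ (-r) * |∑ i ∈ Finset.Ico m n, a i| := mul_add _ _ _
      _ ≤ (n:ℝ) ^ (-r) * |∑ i ∈ Finset.range m, a i|
          + ∑ i ∈ Finset.Ico m n, (n:ℝ) ^ (-r) * |a i| := by
          apply add_le_add_right
          rw [← Finset.mul_sum]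
          exact mul_le_mul_of_nonneg_left (Finset.abs_sum_le_sum_abs _ _) hnr
  have hterm : ∑ i ∈ Finset.Ico m n, (n:ℝ) ^ (-r) * |a i| ≤ ∑ i ∈ Finset.Ico m n, f i := by
    apply Finset.sum_le_sum
    intro i hi
    have hi1 : 1 ≤ i := le_trans hm1 (Finset.mem_Ico.1 hi).1
    have hin : (i:ℝ) ≤ (n:ℝ) := Nat.cast_le.2 (Finset.mem_Ico.1 hi).2.le
    have hipos : (0:ℝ) < (i:ℝ) := by exact_mod_cast hi1
    exact mul_le_mul_of_nonneg_right
      (Real.rpow_le_rpow_of_nonpos hipos hin (by linarith)) (abs_nonneg _)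
  have hshift : Summable (fun j => f (j + m)) := (summable_nat_add_iff m).2 h
  have htail2 : ∑ i ∈ Finset.Ico m n, f i ≤ ∑' i, f (i + m) := by
    rw [Finset.sum_Ico_eq_sum_range]
    have hcong : ∀ j, f (m + j) = f (j + m) := fun j => by rw [Nat.add_comm]
    simp_rw [hcong]
    exact Summable.sum_le_tsum (Finset.range (n - m)) (fun j _ => hfnn _) hshift
  have h1 : (n:ℝ) ^ (-r) * |∑ i ∈ Finset.range m, a i| < ε/2 := hN n hnN
  calc |(n:ℝ) ^ (-r) * ∑ i ∈ Finset.range n, a i|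
      ≤ (n:ℝ) ^ (-r) * |∑ i ∈ Finset.range m, a i|
        + ∑ i ∈ Finset.Ico m n, (n:ℝ) ^ (-r) * |a i| := habs
    _ < ε/2 + ε/2 := by
        apply add_lt_add_of_lt_of_le h1
        exact le_trans hterm (le_of_lt (lt_of_le_of_lt htail2 hmtail))
    _ = ε := by ring

/-- Marcinkiewicz–Zygmund strong law of large numbers: if `(ξ i)` are i.i.d.
real random variables with `E|ξ 0|^p < ∞` for some `p ∈ (0,1)`, then
`n^(-1/p) ∑_{i<n} ξ i → 0` almost surely. -/
theorem marcinkiewicz_zygmund_slln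
    {Ω : Type*} [MeasurableSpace Ω] (ℙ : Measure Ω) [IsProbabilityMeasure ℙ]
    (ξ : ℕ → Ω → ℝ) (hmeas : ∀ i, Measurable (ξ i))
    (hindep : ProbabilityTheory.iIndepFun ξ ℙ)
    (hident : ∀ i, ProbabilityTheory.IdentDistrib (ξ i) (ξ 0) ℙ ℙ)
    (p : ℝ) (hp0 : 0 < p) (hp1 : p < 1)
    (hint : Integrable (fun ω => |ξ 0 ω| ^ p) ℙ) :
    ∀ᵐ ω ∂ℙ, Tendsto
      (fun n : ℕ => (n : ℝ) ^ (-(1 / p)) * ∑ i ∈ Finset.range n, ξ i ω)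
      atTop (nhds 0) := by
  have hr : 1 < 1/p := one_lt_one_div hp0 hp1
  have hr0 : (0:ℝ) < 1/p := by linarith
  have hpr : p * (1/p) = 1 := by field_simp
  -- measurability of |x|^p composed maps
  have habs_pow_meas : Measurable (fun x : ℝ => |x| ^ p) :=
    measurable_abs.pow measurable_const
  -- Part A : Borel–Cantelli
  set s : ℕ → Set Ω := fun i => {ω | (i:ℝ) < |ξ i ω| ^ p} with hs
  have hident' : ∀ i, ProbabilityTheory.IdentDistrib
      (fun ω => |ξ i ω| ^ p) (fun ω => |ξ 0 ω| ^ p) ℙ ℙ := fun i =>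
    (hident i).comp habs_pow_meas
  have hPs : ∀ i, ℙ (s i) = ℙ {ω | |ξ 0 ω| ^ p ∈ Set.Ioi (i:ℝ)} := by
    intro i
    have := (hident' i).measure_mem_eq (measurableSet_Ioi (a := (i:ℝ)))
    simpa [hs, Set.preimage, Set.mem_Ioi] using this
  have hsum_fin : (∑' i : ℕ, ℙ (s i)) ≠ ∞ := by
    letI : MeasureSpace Ω := ⟨ℙ⟩
    have hX : (∑' j : ℕ, ℙ {ω | |ξ 0 ω| ^ p ∈ Set.Ioi (j : ℝ)}) < ∞ :=
      ProbabilityTheory.tsum_prob_mem_Ioi_lt_top hint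
        (fun ω => Real.rpow_nonneg (abs_nonneg _) p)
    rw [funext hPs]
    exact hX.ne
  have hBC : ∀ᵐ ω ∂ℙ, {i : ℕ | ω ∈ s i}.Finite :=
    MeasureTheory.ae_finite_setOf_mem hsum_fin
  -- Part B : summability of truncated series
  set g : ℕ → ℝ → ℝ := fun i x =>
    if |x| ≤ (i:ℝ) ^ (1/p) then ((i:ℝ)) ^ (-(1/p)) * |x| else 0 with hg
  have hg_meas : ∀ i, Measurable (g i) := by
    intro i
    apply Measurable.ite (measurableSet_le measurable_abs measurable_const)
      (measurable_const.mul measurable_abs) measurable_const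
  have hg_nn : ∀ i x, 0 ≤ g i x := by
    intro i x
    rw [hg]; dsimp only
    split
    · exact mul_nonneg (Real.rpow_nonneg (Nat.cast_nonneg i) _) (abs_nonneg _)
    · exact le_refl 0
  have hg_sum : ∀ x : ℝ, Summable (fun i : ℕ => g i x) := by
    intro x
    apply Summable.of_nonneg_of_le (fun i => hg_nn i x)
      (fun i => ?_) ((Real.summable_nat_rpow.2 (by linarith : -(1/p) < -1)).mul_right |x|)
    rw [hg]; dsimp only
    split
    · exact le_refl _
    · exact mul_nonneg (Real.rpow_nonneg (Nat.cast_nonneg i) _) (abs_nonneg _)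
  set C : ℝ := 2 ^ (1/p) / (1/p - 1) * 2 with hC
  have hC0 : 0 ≤ C := by
    apply mul_nonneg _ (by norm_num)
    apply div_nonneg (Real.rpow_nonneg (by norm_num) _) (by linarith)
  have hgp : ∀ x : ℝ, (∑' i : ℕ, g i x) ≤ C * |x| ^ p := fun x =>
    mz_pointwise hp0 hp1 (abs_nonneg x)
  -- the ENNReal-valued computation
  have hGmeas : ∀ i, Measurable (fun ω => ENNReal.ofReal (g i (ξ i ω))) := fun i =>
    ((hg_meas i).comp (hmeas i)).ennreal_ofReal
  have hGmeas0 : ∀ i, Measurable (fun ω => ENNReal.ofReal (g i (ξ 0 ω))) := fun i =>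
    ((hg_meas i).comp (hmeas 0)).ennreal_ofReal
  have key1 : ∀ i, ∫⁻ ω, ENNReal.ofReal (g i (ξ i ω)) ∂ℙ
      = ∫⁻ ω, ENNReal.ofReal (g i (ξ 0 ω)) ∂ℙ := by
    intro i
    rw [← lintegral_map ((hg_meas i).ennreal_ofReal) (hmeas i),
      ← lintegral_map ((hg_meas i).ennreal_ofReal) (hmeas 0), (hident i).map_eq]
  have hfin0 : ∫⁻ ω, ENNReal.ofReal (|ξ 0 ω| ^ p) ∂ℙ < ∞ := by
    rw [← hasFiniteIntegral_iff_ofReal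
      (Eventually.of_forall fun ω => Real.rpow_nonneg (abs_nonneg _) p)]
    exact hint.2
  have key2 : ∫⁻ ω, ∑' i : ℕ, ENNReal.ofReal (g i (ξ i ω)) ∂ℙ < ∞ := by
    rw [lintegral_tsum (fun i => (hGmeas i).aemeasurable)]
    calc ∑' i : ℕ, ∫⁻ ω, ENNReal.ofReal (g i (ξ i ω)) ∂ℙ
        = ∑' i : ℕ, ∫⁻ ω, ENNReal.ofReal (g i (ξ 0 ω)) ∂ℙ := by
          exact tsum_congr key1
      _ = ∫⁻ ω, ∑' i : ℕ, ENNReal.ofReal (g i (ξ 0 ω)) ∂ℙ := by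
          rw [lintegral_tsum (fun i => (hGmeas0 i).aemeasurable)]
      _ ≤ ∫⁻ ω, ENNReal.ofReal (C * |ξ 0 ω| ^ p) ∂ℙ := by
          apply lintegral_mono
          intro ω
          show (∑' i : ℕ, ENNReal.ofReal (g i (ξ 0 ω))) ≤ ENNReal.ofReal (C * |ξ 0 ω| ^ p)
          rw [← ENNReal.ofReal_tsum_of_nonneg (fun i => hg_nn i _) (hg_sum _)]
          exact ENNReal.ofReal_le_ofReal (hgp _)
      _ = ENNReal.ofReal C * ∫⁻ ω, ENNReal.ofReal (|ξ 0 ω| ^ p) ∂ℙ := by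
          simp_rw [ENNReal.ofReal_mul hC0]
          rw [lintegral_const_mul' _ _ ENNReal.ofReal_ne_top]
      _ < ∞ := ENNReal.mul_lt_top ENNReal.ofReal_lt_top hfin0
  have hae_sum : ∀ᵐ ω ∂ℙ, Summable (fun i : ℕ => g i (ξ i ω)) := by
    have hmtsum : Measurable (fun ω => ∑' i : ℕ, ENNReal.ofReal (g i (ξ i ω))) :=
      Measurable.ennreal_tsum hGmeas
    filter_upwards [ae_lt_top hmtsum key2.ne] with ω hω
    have := ENNReal.summable_toReal hω.ne
    refine this.congr fun i => ?_
    rw [ENNReal.toReal_ofReal (hg_nn i _)]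
  -- Part C : combining
  filter_upwards [hBC, hae_sum] with ω hfin hsumm
  -- find a bound beyond which there is no truncation
  obtain ⟨N, hN⟩ := hfin.bddAbove
  have htail : ∀ i, N + 1 ≤ i → |ξ i ω| ≤ (i:ℝ) ^ (1/p) := by
    intro i hi
    have hni : ω ∉ s i := by
      intro hmem
      have := hN hmem
      omega
    have h1 : |ξ i ω| ^ p ≤ (i:ℝ) := not_lt.1 (fun h => hni h)
    have h2 : (|ξ i ω| ^ p) ^ (1/p:ℝ) ≤ (i:ℝ) ^ (1/p) :=
      Real.rpow_le_rpow (Real.rpow_nonneg (abs_nonneg _) _) h1 hr0.le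
    rwa [← Real.rpow_mul (abs_nonneg _), hpr, Real.rpow_one] at h2
  -- full summability
  have hsum_full : Summable (fun i : ℕ => (i:ℝ) ^ (-(1/p)) * |ξ i ω|) := by
    rw [← summable_nat_add_iff (N + 1)]
    apply ((summable_nat_add_iff (N + 1)).2 hsumm).congr
    intro i
    rw [hg]; dsimp only
    rw [if_pos (htail (i + (N + 1)) (by omega))]
  exact mz_kronecker hr0 hsum_full
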